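/- For a three-qubit pure state |ψ⟩ = α₀|000⟩ + α₁e^{iθ}|100⟩ + α₂|101⟩ + α₃|110⟩ + α₄|111⟩ with α₀,…,α₄ ≥ 0, Σᵢ αᵢ² = 1 and θ ∈ [0,π], the exact identity S₁₂² + τ₁₃² + τ₂₃² = 1 + 8α₀²(α₃² + α₄²) = 3 − 8(α₀² − 1/2)² − 8α₀²α₁² − 8α₀²α₂² holds; consequently S₁₂² + [3f(ρ₁₃) − 2]² + [3f(ρ₂₃) − 2]² ≤ 3, and by symmetry S₁₃² + [3f(ρ₁₂) − 2]² + [3f(ρ₂₃) − 2]² ≤ 3 and S₂₃² + [3f(ρ₁₂) − 2]² + [3f(ρ₁₃) − 2]² ≤ 3. -/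
import Mathlib


/-- Squared steering observable S₁₂² of the reduced state ρ₁₂ of the three-qubit
pure state α₀|000⟩ + α₁e^{iθ}|100⟩ + α₂|101⟩ + α₃|110⟩ + α₄|111⟩. -/
noncomputable def S12sq (a0 a1 a2 a3 a4 θ : ℝ) : ℝ :=
  1 + 8 * a0 ^ 2 * a3 ^ 2 - 4 * a0 ^ 2 * a2 ^ 2 - 4 * a1 ^ 2 * a4 ^ 2
    - 4 * a2 ^ 2 * a3 ^ 2 + 8 * a1 * a2 * a3 * a4 * Real.cos θ

/-- Squared steering observable S₁₃² of the reduced state ρ₁₃. -/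
noncomputable def S13sq (a0 a1 a2 a3 a4 θ : ℝ) : ℝ :=
  1 + 8 * a0 ^ 2 * a2 ^ 2 - 4 * a0 ^ 2 * a3 ^ 2 - 4 * a1 ^ 2 * a4 ^ 2
    - 4 * a2 ^ 2 * a3 ^ 2 + 8 * a1 * a2 * a3 * a4 * Real.cos θ

/-- Squared steering observable S₂₃² of the reduced state ρ₂₃. -/
noncomputable def S23sq (a0 a1 a2 a3 a4 θ : ℝ) : ℝ :=
  1 - 4 * a0 ^ 2 * a2 ^ 2 - 4 * a0 ^ 2 * a3 ^ 2 + 8 * a1 ^ 2 * a4 ^ 2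
    + 8 * a2 ^ 2 * a3 ^ 2 - 16 * a1 * a2 * a3 * a4 * Real.cos θ

/-- Partial tangle τ₁₂ = 2α₀√(α₃²+α₄²). -/
noncomputable def tau12 (a0 a1 a2 a3 a4 θ : ℝ) : ℝ :=
  2 * a0 * Real.sqrt (a3 ^ 2 + a4 ^ 2)

/-- Partial tangle τ₁₃ = 2α₀√(α₂²+α₄²). -/
noncomputable def tau13 (a0 a1 a2 a3 a4 θ : ℝ) : ℝ :=
  2 * a0 * Real.sqrt (a2 ^ 2 + a4 ^ 2)

/-- Partial tangle τ₂₃ = 2√(α₀²α₄²+α₁²α₄²+α₂²α₃²−2α₁α₂α₃α₄cosθ). -/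
noncomputable def tau23 (a0 a1 a2 a3 a4 θ : ℝ) : ℝ :=
  2 * Real.sqrt (a0 ^ 2 * a4 ^ 2 + a1 ^ 2 * a4 ^ 2 + a2 ^ 2 * a3 ^ 2
    - 2 * a1 * a2 * a3 * a4 * Real.cos θ)

/-- Average teleportation fidelity f(ρ₁₂), determined by τ₁₂ = 3f(ρ₁₂) − 2. -/
noncomputable def fid12 (a0 a1 a2 a3 a4 θ : ℝ) : ℝ := (tau12 a0 a1 a2 a3 a4 θ + 2) / 3

/-- Average teleportation fidelity f(ρ₁₃), determined by τ₁₃ = 3f(ρ₁₃) − 2. -/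
noncomputable def fid13 (a0 a1 a2 a3 a4 θ : ℝ) : ℝ := (tau13 a0 a1 a2 a3 a4 θ + 2) / 3

/-- Average teleportation fidelity f(ρ₂₃), determined by τ₂₃ = 3f(ρ₂₃) − 2. -/
noncomputable def fid23 (a0 a1 a2 a3 a4 θ : ℝ) : ℝ := (tau23 a0 a1 a2 a3 a4 θ + 2) / 3

set_option maxHeartbeats 2000000 in
/-- For a three-qubit pure state α₀|000⟩ + α₁e^{iθ}|100⟩ + α₂|101⟩ + α₃|110⟩ + α₄|111⟩:
the exact identity
S₁₂² + τ₁₃² + τ₂₃² = 1 + 8α₀²(α₃²+α₄²) = 3 − 8(α₀²−1/2)² − 8α₀²α₁² − 8α₀²α₂²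
holds; consequently S₁₂² + [3f(ρ₁₃)−2]² + [3f(ρ₂₃)−2]² ≤ 3, and by symmetry
S₁₃² + [3f(ρ₁₂)−2]² + [3f(ρ₂₃)−2]² ≤ 3 and S₂₃² + [3f(ρ₁₂)−2]² + [3f(ρ₁₃)−2]² ≤ 3. -/
theorem stmt15 (a0 a1 a2 a3 a4 θ : ℝ)
    (h0 : 0 ≤ a0) (h1 : 0 ≤ a1) (h2 : 0 ≤ a2) (h3 : 0 ≤ a3) (h4 : 0 ≤ a4)
    (hsum : a0 ^ 2 + a1 ^ 2 + a2 ^ 2 + a3 ^ 2 + a4 ^ 2 = 1)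
    (hθ : θ ∈ Set.Icc 0 Real.pi) :
    S12sq a0 a1 a2 a3 a4 θ + tau13 a0 a1 a2 a3 a4 θ ^ 2 + tau23 a0 a1 a2 a3 a4 θ ^ 2
        = 1 + 8 * a0 ^ 2 * (a3 ^ 2 + a4 ^ 2) ∧
    S12sq a0 a1 a2 a3 a4 θ + tau13 a0 a1 a2 a3 a4 θ ^ 2 + tau23 a0 a1 a2 a3 a4 θ ^ 2
        = 3 - 8 * (a0 ^ 2 - 1 / 2) ^ 2 - 8 * a0 ^ 2 * a1 ^ 2 - 8 * a0 ^ 2 * a2 ^ 2 ∧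
    S12sq a0 a1 a2 a3 a4 θ + (3 * fid13 a0 a1 a2 a3 a4 θ - 2) ^ 2
        + (3 * fid23 a0 a1 a2 a3 a4 θ - 2) ^ 2 ≤ 3 ∧
    S13sq a0 a1 a2 a3 a4 θ + (3 * fid12 a0 a1 a2 a3 a4 θ - 2) ^ 2
        + (3 * fid23 a0 a1 a2 a3 a4 θ - 2) ^ 2 ≤ 3 ∧
    S23sq a0 a1 a2 a3 a4 θ + (3 * fid12 a0 a1 a2 a3 a4 θ - 2) ^ 2
        + (3 * fid13 a0 a1 a2 a3 a4 θ - 2) ^ 2 ≤ 3 := by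

  obtain ⟨hθ0, hθ1⟩ := hθ
  set c := Real.cos θ with hc
  have hc1 : c ≤ 1 := Real.cos_le_one θ
  have hc2 : -1 ≤ c := Real.neg_one_le_cos θ
  have hP : 0 ≤ a1 * a2 * a3 * a4 := by positivity
  have h13 : tau13 a0 a1 a2 a3 a4 θ ^ 2 = 4 * a0 ^ 2 * (a2 ^ 2 + a4 ^ 2) := by
    have : (0:ℝ) ≤ a2 ^ 2 + a4 ^ 2 := by positivity
    rw [tau13, mul_pow, mul_pow, Real.sq_sqrt this]; ring
  have h12 : tau12 a0 a1 a2 a3 a4 θ ^ 2 = 4 * a0 ^ 2 * (a3 ^ 2 + a4 ^ 2) := by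
    have : (0:ℝ) ≤ a3 ^ 2 + a4 ^ 2 := by positivity
    rw [tau12, mul_pow, mul_pow, Real.sq_sqrt this]; ring
  have hrad : (0:ℝ) ≤ a0 ^ 2 * a4 ^ 2 + a1 ^ 2 * a4 ^ 2 + a2 ^ 2 * a3 ^ 2
      - 2 * a1 * a2 * a3 * a4 * c := by
    nlinarith [sq_nonneg (a1 * a4 - a2 * a3), sq_nonneg a0, mul_nonneg hP (sub_nonneg.2 hc1)]
  have h23 : tau23 a0 a1 a2 a3 a4 θ ^ 2 = 4 * (a0 ^ 2 * a4 ^ 2 + a1 ^ 2 * a4 ^ 2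
      + a2 ^ 2 * a3 ^ 2 - 2 * a1 * a2 * a3 * a4 * c) := by
    rw [tau23, mul_pow, Real.sq_sqrt hrad]; ring
  have e1 : S12sq a0 a1 a2 a3 a4 θ + tau13 a0 a1 a2 a3 a4 θ ^ 2 + tau23 a0 a1 a2 a3 a4 θ ^ 2
      = 1 + 8 * a0 ^ 2 * (a3 ^ 2 + a4 ^ 2) := by
    rw [h13, h23, S12sq]; ring
  have e2 : S12sq a0 a1 a2 a3 a4 θ + tau13 a0 a1 a2 a3 a4 θ ^ 2 + tau23 a0 a1 a2 a3 a4 θ ^ 2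
      = 3 - 8 * (a0 ^ 2 - 1 / 2) ^ 2 - 8 * a0 ^ 2 * a1 ^ 2 - 8 * a0 ^ 2 * a2 ^ 2 := by
    rw [e1]; nlinarith [hsum]
  refine ⟨e1, e2, ?_, ?_, ?_⟩
  · have : 3 * fid13 a0 a1 a2 a3 a4 θ - 2 = tau13 a0 a1 a2 a3 a4 θ := by rw [fid13]; ring
    rw [this]
    have : 3 * fid23 a0 a1 a2 a3 a4 θ - 2 = tau23 a0 a1 a2 a3 a4 θ := by rw [fid23]; ring
    rw [this, e2]
    nlinarith [sq_nonneg (a0 ^ 2 - 1 / 2), sq_nonneg (a0 * a1), sq_nonneg (a0 * a2)]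
  · have h12' : 3 * fid12 a0 a1 a2 a3 a4 θ - 2 = tau12 a0 a1 a2 a3 a4 θ := by rw [fid12]; ring
    have h23' : 3 * fid23 a0 a1 a2 a3 a4 θ - 2 = tau23 a0 a1 a2 a3 a4 θ := by rw [fid23]; ring
    rw [h12', h23', h12, h23, S13sq]
    have key2 : 8 * a0 ^ 2 * a2 ^ 2 + 8 * a0 ^ 2 * a4 ^ 2 ≤ 2 := by
      nlinarith [sq_nonneg (a0 ^ 2 - 1 / 2), sq_nonneg (a0 * a1), sq_nonneg (a0 * a3)]
    linarith [key2]
  · have h12' : 3 * fid12 a0 a1 a2 a3 a4 θ - 2 = tau12 a0 a1 a2 a3 a4 θ := by rw [fid12]; ring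
    have h13' : 3 * fid13 a0 a1 a2 a3 a4 θ - 2 = tau13 a0 a1 a2 a3 a4 θ := by rw [fid13]; ring
    rw [h12', h13', h12, h13, S23sq]
    have key : 8 * a0 ^ 2 * a4 ^ 2 + 8 * a1 ^ 2 * a4 ^ 2 + 8 * a2 ^ 2 * a3 ^ 2
        + 16 * (a1 * a2 * a3 * a4) ≤ 2 := by
      nlinarith [sq_nonneg (a1 * a3 - a2 * a4), sq_nonneg (a3 ^ 2 + a4 ^ 2 - 1 / 2),
        sq_nonneg (a0 * a3), sq_nonneg (a1 * a3), sq_nonneg (a2 * a4)]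
    have hpc : -(16 * (a1 * a2 * a3 * a4) * c) ≤ 16 * (a1 * a2 * a3 * a4) := by
      nlinarith [mul_nonneg hP (show (0:ℝ) ≤ 1 + c by linarith)]
    linarith [key, hpc]
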